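/- Invariant 1 part (b) for the generic algorithm: for every reachable configuration of Algorithm GQME and every process p, if p is in the queue of M but is not the head, then: p is in phase DOORWAY iff p is not visible, p is in phase WAIT iff p is visible, and Wait[p] = true. -/

import Mathlib

/-- The phase of a process in Algorithm GQME. -/
inductive GPhase
  | nearNCS   -- after dequeue, before the next enqueue (includes the NCS)
  | doorway   -- between enqueue and isHead
  | wait
  | doneWait
  | noWait    -- after isHead returned true, before dequeue
deriving DecidableEq

/-- A configuration of Algorithm GQME: the state (Q, V) of the atomic MutexQueue M,
the Wait registers, the phase of each process, and the number of passages each process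
has started (incremented at its enqueue). -/
structure GConfig (N : ℕ) where
  Q : List (Fin N)
  V : Finset (Fin N)
  Wait : Fin N → Bool
  phase : Fin N → GPhase
  pass : Fin N → ℕ

/-- Initially the queue is empty, all Wait registers are true, all processes are in
NEAR_NCS, and no passages have been started. -/
def gInit (N : ℕ) : GConfig N :=
  ⟨[], ∅, fun _ => true, fun _ => GPhase.nearNCS, fun _ => 0⟩

/-- Events (shared-memory steps) of Algorithm GQME. -/
inductive GEv (N : ℕ)
  | enq (p : Fin N)                       -- M.enqueue()               (line 2)
  | isHeadT (p : Fin N)                   -- M.isHead() returns true   (line 3)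
  | isHeadF (p : Fin N)                   -- M.isHead() returns false  (line 3)
  | exitWait (p : Fin N)
  | deq (p : Fin N) (r : Option (Fin N))
deriving DecidableEq

/-- The transition relation of Algorithm GQME, following the pseudocode and the
(non-broken) MutexQueue transition function. -/
inductive GStep (N : ℕ) : GConfig N → GEv N → GConfig N → Prop
  | enq (c : GConfig N) (p : Fin N) :
      c.phase p = GPhase.nearNCS → p ∉ c.Q →
      GStep N c (GEv.enq p)
        { c with Q := c.Q ++ [p],
                 phase := Function.update c.phase p GPhase.doorway,
                 pass := Function.update c.pass p (c.pass p + 1) }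
  | isHeadT (c : GConfig N) (p : Fin N) :
      c.phase p = GPhase.doorway → p ∈ c.Q → p ∉ c.V → c.Q.head? = some p →
      GStep N c (GEv.isHeadT p)
        { c with V := insert p c.V,
                 phase := Function.update c.phase p GPhase.noWait }
  | isHeadF (c : GConfig N) (p : Fin N) :
      c.phase p = GPhase.doorway → p ∈ c.Q → p ∉ c.V → c.Q.head? ≠ some p →
      GStep N c (GEv.isHeadF p)
        { c with V := insert p c.V,
                 phase := Function.update c.phase p GPhase.wait }
  | exitWait (c : GConfig N) (p : Fin N) :
      c.phase p = GPhase.wait → c.Wait p = false →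
      GStep N c (GEv.exitWait p)
        { c with Wait := Function.update c.Wait p true,
                 phase := Function.update c.phase p GPhase.doneWait }
  | deq (c : GConfig N) (p : Fin N) (r : Option (Fin N)) :
      (c.phase p = GPhase.noWait ∨ c.phase p = GPhase.doneWait) →
      c.Q.head? = some p → p ∈ c.V →
      r = (match c.Q[1]? with
           | some q => if q ∈ c.V then some q else none
           | none => none) →
      GStep N c (GEv.deq p r)
        { c with Q := c.Q.tail, V := c.V.erase p,
                 Wait := (match r with
                          | some q => Function.update c.Wait q false
                          | none => c.Wait),
                 phase := Function.update c.phase p GPhase.nearNCS }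

/-- `GReaches N c H c'`: the history H of events leads from configuration c to c'. -/
inductive GReaches (N : ℕ) : GConfig N → List (GEv N) → GConfig N → Prop
  | nil (c : GConfig N) : GReaches N c [] c
  | cons {c c1 c2 : GConfig N} {e : GEv N} {l : List (GEv N)} :
      GStep N c e c1 → GReaches N c1 l c2 → GReaches N c (e :: l) c2

/-- A process is in the critical section iff it is between line 3/5 and line 7. -/
def inCS {N : ℕ} (c : GConfig N) (p : Fin N) : Prop :=
  c.phase p = GPhase.noWait ∨ c.phase p = GPhase.doneWait

def GInv {N : ℕ} (c : GConfig N) : Prop :=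
  c.Q.Nodup ∧
  (∀ q, q ∈ c.Q ↔ c.phase q ≠ GPhase.nearNCS) ∧
  (∀ q, c.phase q = GPhase.doorway → q ∉ c.V) ∧
  (∀ q, c.phase q ≠ GPhase.doorway → c.phase q ≠ GPhase.nearNCS → q ∈ c.V) ∧
  (∀ q, (c.phase q = GPhase.noWait ∨ c.phase q = GPhase.doneWait) →
      c.Q.head? = some q) ∧
  (∀ q, c.Wait q = false → c.Q.head? = some q ∧ c.phase q = GPhase.wait) ∧
  (∀ q, q ∈ c.V → q ∈ c.Q)

lemma gInv_init (N : ℕ) : GInv (gInit N) := by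
  refine ⟨List.nodup_nil, ?_, ?_, ?_, ?_, ?_, ?_⟩ <;> simp [gInit]

lemma gInv_step {N : ℕ} {c c' : GConfig N} {e : GEv N}
    (h : GStep N c e c') (hI : GInv c) : GInv c' := by
  obtain ⟨hnd, hmem, hdw, hV, hhd, hW, hVQ⟩ := hI
  cases h with
  | enq p hph hnq =>
    have hQne : ∀ {q : Fin N}, c.Q.head? = some q → (c.Q ++ [p]).head? = some q := by
      intro q h
      cases hc : c.Q with
      | nil => rw [hc] at h; simp at h
      | cons a t => rw [hc] at h; simpa using h
    refine ⟨?_, ?_, ?_, ?_, ?_, ?_, ?_⟩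
    · simpa [List.nodup_append] using ⟨hnd, fun a ha hap => hnq (hap ▸ ha)⟩
    · intro q
      by_cases hq : q = p
      · subst hq; simp [Function.update]
      · simp [Function.update, hq, hmem q]
    · intro q hq
      by_cases hqp : q = p
      · subst hqp; exact fun h => hnq (hVQ q h)
      · simp only [Function.update, dif_neg hqp] at hq
        exact hdw q hq
    · intro q h1 h2
      by_cases hqp : q = p
      · subst hqp; simp [Function.update] at h1
      · simp only [Function.update, dif_neg hqp] at h1 h2
        exact hV q h1 h2
    · intro q hq
      by_cases hqp : q = p
      · subst hqp; simp [Function.update] at hq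
      · simp only [Function.update, dif_neg hqp] at hq
        exact hQne (hhd q hq)
    · intro q hq
      have ⟨h1, h2⟩ := hW q hq
      have hqp : q ≠ p := by
        intro h; subst h; rw [hph] at h2; exact absurd h2 (by simp)
      exact ⟨hQne h1, by simp [Function.update, hqp, h2]⟩
    · intro q hq; exact List.mem_append_left _ (hVQ q hq)
  | isHeadT p hph hpQ hpV hhead =>
    refine ⟨hnd, ?_, ?_, ?_, ?_, ?_, ?_⟩
    · intro q
      by_cases hq : q = p
      · subst hq; simp [Function.update, hpQ]
      · simp [Function.update, hq, hmem q]
    · intro q hq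
      by_cases hqp : q = p
      · subst hqp; simp [Function.update] at hq
      · simp only [Function.update, dif_neg hqp] at hq
        simp [hqp, hdw q hq]
    · intro q h1 h2
      by_cases hqp : q = p
      · subst hqp; simp
      · simp only [Function.update, dif_neg hqp] at h1 h2
        exact Finset.mem_insert_of_mem (hV q h1 h2)
    · intro q hq
      by_cases hqp : q = p
      · subst hqp; exact hhead
      · simp only [Function.update, dif_neg hqp] at hq
        exact hhd q hq
    · intro q hq
      have ⟨h1, h2⟩ := hW q hq
      have hqp : q ≠ p := by
        intro h; subst h; rw [hph] at h2; exact absurd h2 (by simp)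
      exact ⟨h1, by simp [Function.update, hqp, h2]⟩
    · intro q hq
      rcases Finset.mem_insert.mp hq with h | h
      · subst h; exact hpQ
      · exact hVQ q h
  | isHeadF p hph hpQ hpV hhead =>
    refine ⟨hnd, ?_, ?_, ?_, ?_, ?_, ?_⟩
    · intro q
      by_cases hq : q = p
      · subst hq; simp [Function.update, hpQ]
      · simp [Function.update, hq, hmem q]
    · intro q hq
      by_cases hqp : q = p
      · subst hqp; simp [Function.update] at hq
      · simp only [Function.update, dif_neg hqp] at hq
        simp [hqp, hdw q hq]
    · intro q h1 h2
      by_cases hqp : q = p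
      · subst hqp; simp
      · simp only [Function.update, dif_neg hqp] at h1 h2
        exact Finset.mem_insert_of_mem (hV q h1 h2)
    · intro q hq
      by_cases hqp : q = p
      · subst hqp; simp [Function.update] at hq
      · simp only [Function.update, dif_neg hqp] at hq
        exact hhd q hq
    · intro q hq
      have ⟨h1, h2⟩ := hW q hq
      have hqp : q ≠ p := by
        intro h; subst h; rw [hph] at h2; exact absurd h2 (by simp)
      exact ⟨h1, by simp [Function.update, hqp, h2]⟩
    · intro q hq
      rcases Finset.mem_insert.mp hq with h | h
      · subst h; exact hpQ
      · exact hVQ q h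
  | exitWait p hph hw =>
    have hhp : c.Q.head? = some p := (hW p hw).1
    refine ⟨hnd, ?_, ?_, ?_, ?_, ?_, ?_⟩
    · intro q
      by_cases hq : q = p
      · subst hq
        simp [Function.update, (hmem q).mpr (by rw [hph]; simp)]
      · simp [Function.update, hq, hmem q]
    · intro q hq
      by_cases hqp : q = p
      · subst hqp; simp [Function.update] at hq
      · simp only [Function.update, dif_neg hqp] at hq
        exact hdw q hq
    · intro q h1 h2
      by_cases hqp : q = p
      · subst hqp; exact hV q (by rw [hph]; simp) (by rw [hph]; simp)
      · simp only [Function.update, dif_neg hqp] at h1 h2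
        exact hV q h1 h2
    · intro q hq
      by_cases hqp : q = p
      · subst hqp; exact hhp
      · simp only [Function.update, dif_neg hqp] at hq
        exact hhd q hq
    · intro q hq
      have hqp : q ≠ p := by
        intro h; subst h; simp [Function.update] at hq
      simp only [Function.update, dif_neg hqp] at hq
      have ⟨h1, h2⟩ := hW q hq
      exact ⟨h1, by simp [Function.update, hqp, h2]⟩
    · exact hVQ
  | deq p r hph hhead hpV hr =>
    obtain ⟨t, hQ⟩ : ∃ t, c.Q = p :: t := by
      cases hQ : c.Q with
      | nil => rw [hQ] at hhead; simp at hhead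
      | cons a s =>
        rw [hQ] at hhead; simp at hhead; exact ⟨s, by rw [hhead]⟩
    have hpt : p ∉ t := by
      rw [hQ] at hnd; exact (List.nodup_cons.mp hnd).1
    have htail : c.Q.tail = t := by rw [hQ]; rfl
    -- key: membership in tail
    have hmem' : ∀ q, q ∈ t ↔ (q ∈ c.Q ∧ q ≠ p) := by
      intro q
      constructor
      · intro h
        exact ⟨by rw [hQ]; exact List.mem_cons_of_mem _ h,
               by rintro rfl; exact hpt h⟩
      · rintro ⟨h1, h2⟩
        rw [hQ] at h1
        rcases List.mem_cons.mp h1 with h | h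
        · exact absurd h h2
        · exact h
    refine ⟨?_, ?_, ?_, ?_, ?_, ?_, ?_⟩
    · rw [htail]; rw [hQ] at hnd; exact (List.nodup_cons.mp hnd).2
    · intro q
      rw [htail]
      by_cases hqp : q = p
      · subst hqp
        simp [Function.update, hpt]
      · rw [hmem' q]
        simp only [Function.update, dif_neg hqp]
        constructor
        · exact fun h => (hmem q).mp h.1
        · exact fun h => ⟨(hmem q).mpr h, hqp⟩
    · intro q hq
      by_cases hqp : q = p
      · subst hqp; simp [Function.update] at hq
      · simp only [Function.update, dif_neg hqp] at hq
        intro hmemV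
        exact hdw q hq (Finset.mem_of_mem_erase hmemV)
    · intro q h1 h2
      by_cases hqp : q = p
      · subst hqp; simp [Function.update] at h2
      · simp only [Function.update, dif_neg hqp] at h1 h2
        exact Finset.mem_erase.mpr ⟨hqp, hV q h1 h2⟩
    · intro q hq
      by_cases hqp : q = p
      · subst hqp; simp [Function.update] at hq
      · simp only [Function.update, dif_neg hqp] at hq
        have := hhd q hq
        rw [hhead] at this
        exact absurd (Option.some_injective _ this).symm hqp
    · intro q hq
      have hQ1 : c.Q[1]? = t.head? := by
        rw [hQ]; cases t <;> simp
      have hWq : (match r with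
          | some s => Function.update c.Wait s false
          | none => c.Wait) q = false := hq
      rcases hs : c.Q[1]? with _ | s
      · have hr' : r = none := by rw [hr, hs]
        rw [hr'] at hWq
        have ⟨h1, h2⟩ := hW q hWq
        rw [hhead] at h1
        have : p = q := Option.some_injective _ h1
        subst this
        rw [h2] at hph; simp at hph
      · by_cases hsV : s ∈ c.V
        · have hr' : r = some s := by rw [hr, hs]; simp [hsV]
          rw [hr'] at hWq
          by_cases hqs : q = s
          · subst hqs
            have hsp : q ≠ p := by
              rintro rfl
              rw [hQ1] at hs
              exact hpt (List.mem_of_mem_head? hs)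
            have hsQ : q ∈ c.Q := hVQ q hsV
            have hph1 : c.phase q ≠ GPhase.nearNCS := (hmem q).mp hsQ
            have hph2 : c.phase q ≠ GPhase.doorway := fun h => hdw q h hsV
            have hph3 : ¬(c.phase q = GPhase.noWait ∨
                c.phase q = GPhase.doneWait) := by
              intro h
              have := hhd q h
              rw [hhead] at this
              exact hsp (Option.some_injective _ this).symm
            have hwph : c.phase q = GPhase.wait := by
              cases hc : c.phase q
              · exact absurd hc hph1
              · exact absurd hc hph2
              · rfl
              · exact absurd (Or.inr hc) hph3
              · exact absurd (Or.inl hc) hph3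
            constructor
            · show c.Q.tail.head? = some q
              rw [htail, ← hQ1, hs]
            · show Function.update c.phase p GPhase.nearNCS q = GPhase.wait
              simp [Function.update, hsp, hwph]
          · have hWq2 : c.Wait q = false := by
              have h' : Function.update c.Wait s false q = false := hWq
              rwa [Function.update_of_ne hqs] at h'
            have ⟨h1, h2⟩ := hW q hWq2
            rw [hhead] at h1
            have : p = q := Option.some_injective _ h1
            subst this
            rw [h2] at hph; simp at hph
        · have hr' : r = none := by rw [hr, hs]; simp [hsV]
          rw [hr'] at hWq
          have ⟨h1, h2⟩ := hW q hWq
          rw [hhead] at h1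
          have : p = q := Option.some_injective _ h1
          subst this
          rw [h2] at hph; simp at hph
    · intro q hq
      have ⟨hqp, hqV⟩ := Finset.mem_erase.mp hq
      rw [htail, hmem' q]
      exact ⟨hVQ q hqV, hqp⟩

lemma gInv_reach {N : ℕ} {c c' : GConfig N} {H : List (GEv N)}
    (h : GReaches N c H c') (hI : GInv c) : GInv c' := by
  induction h with
  | nil => exact hI
  | cons hs _ ih => exact ih (gInv_step hs hI)

/-- Invariant 1 part (b): in every reachable configuration of Algorithm GQME, if process p
is in the queue of M but not its head, then p is in phase DOORWAY iff p is not visible,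
p is in phase WAIT iff p is visible, and Wait[p] = true. -/
theorem invariant_part_b (N : ℕ) (H : List (GEv N)) (c : GConfig N)
    (hrun : GReaches N (gInit N) H c) (p : Fin N)
    (hp : p ∈ c.Q) (hnh : c.Q.head? ≠ some p) :
    (c.phase p = GPhase.doorway ↔ p ∉ c.V) ∧
    (c.phase p = GPhase.wait ↔ p ∈ c.V) ∧
    c.Wait p = true := by
  obtain ⟨hnd, hmem, hdw, hV, hhd, hW, hVQ⟩ := gInv_reach hrun (gInv_init N)
  have hph1 : c.phase p ≠ GPhase.nearNCS := (hmem p).mp hp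
  have hph3 : ¬(c.phase p = GPhase.noWait ∨ c.phase p = GPhase.doneWait) := by
    intro h; exact hnh (hhd p h)
  have hWt : c.Wait p = true := by
    cases hw : c.Wait p with
    | false => exact absurd (hW p hw).1 hnh
    | true => rfl
  refine ⟨⟨fun h => hdw p h, fun h => ?_⟩, ⟨fun h => hV p (by simp [h]) (by simp [h]), fun h => ?_⟩, hWt⟩
  · cases hc : c.phase p <;> simp_all
  · have : c.phase p ≠ GPhase.doorway := fun hd => hdw p hd h
    cases hc : c.phase p <;> simp_all
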